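/- Let A be an lfp category in which every subobject is pure. If every finitely generated object of A is finitely presentable, then A is strictly lfp. -/

import Mathlib

open CategoryTheory Limits Opposite Function

universe w v u

/-- An object is finitely presentable if its hom-functor preserves filtered colimits. -/
def IsFinitelyPresentable {C : Type u} [Category.{v} C] (A : C) : Prop :=
  ∀ (J : Type v) [SmallCategory J] [IsFiltered J] (Dg : J ⥤ C) (cc : Cocone Dg),
    Nonempty (IsColimit cc) → Nonempty (IsColimit ((coyoneda.obj (op A)).mapCocone cc))

/-- A diagram of monomorphisms. -/
def MonoDiagram {C : Type u} [Category.{v} C] {J : Type*} [Category J] (Dg : J ⥤ C) : Prop :=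
  ∀ ⦃i j : J⦄ (f : i ⟶ j), Mono (Dg.map f)

/-- An object is finitely generated if its hom-functor preserves filtered colimits of
monomorphisms. -/
def IsFinitelyGenerated {C : Type u} [Category.{v} C] (A : C) : Prop :=
  ∀ (J : Type v) [SmallCategory J] [IsFiltered J] (Dg : J ⥤ C), MonoDiagram Dg →
    ∀ (cc : Cocone Dg),
      Nonempty (IsColimit cc) → Nonempty (IsColimit ((coyoneda.obj (op A)).mapCocone cc))

/-- A locally finitely presentable category: cocomplete, with a small family representing
all finitely presentable objects, such that every object is a filtered colimit of
finitely presentable objects. -/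
def IsLFP (C : Type u) [Category.{v} C] : Prop :=
  HasColimits C ∧
  (∃ (ι : Type v) (G : ι → C), (∀ i, _root_.IsFinitelyPresentable (G i)) ∧
    ∀ X : C, _root_.IsFinitelyPresentable X → ∃ i, Nonempty (X ≅ G i)) ∧
  ∀ X : C, ∃ (J : Type v) (_ : SmallCategory J) (_ : IsFiltered J) (Dg : J ⥤ C)
    (cc : Cocone Dg), (∀ j, _root_.IsFinitelyPresentable (Dg.obj j)) ∧ Nonempty (IsColimit cc) ∧
    Nonempty (cc.pt ≅ X)

/-- A functor is finitary if it preserves filtered colimits. -/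
def IsFinitary {C : Type u} [Category.{v} C] {B : Type w} [Category.{v} B] (F : C ⥤ B) : Prop :=
  ∀ (J : Type v) [SmallCategory J] [IsFiltered J] (Dg : J ⥤ C) (cc : Cocone Dg),
    Nonempty (IsColimit cc) → Nonempty (IsColimit (F.mapCocone cc))

/-- A functor preserves filtered colimits of monomorphisms. -/
def PreservesFilteredColimitsOfMonos {C : Type u} [Category.{v} C] {B : Type w} [Category.{v} B]
    (F : C ⥤ B) : Prop :=
  ∀ (J : Type v) [SmallCategory J] [IsFiltered J] (Dg : J ⥤ C), MonoDiagram Dg →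
    ∀ (cc : Cocone Dg), Nonempty (IsColimit cc) → Nonempty (IsColimit (F.mapCocone cc))

/-- A functor is finitely bounded if every finitely generated subobject of `F.obj A`
factorizes through the `F`-image of a finitely generated subobject of `A`. -/
def FinitelyBounded {C : Type u} [Category.{v} C] {B : Type w} [Category.{v} B]
    (F : C ⥤ B) : Prop :=
  ∀ (A : C) (M₀ : B) (m₀ : M₀ ⟶ F.obj A), Mono m₀ → IsFinitelyGenerated M₀ →
    ∃ (M : C) (m : M ⟶ A), Mono m ∧ IsFinitelyGenerated M ∧
      ∃ g : M₀ ⟶ F.obj M, g ≫ F.map m = m₀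

/-- A morphism is finitary if it factorizes through a finitely presentable object. -/
def FinitaryMorphism {C : Type u} [Category.{v} C] {X Y : C} (u : X ⟶ Y) : Prop :=
  ∃ (Z : C) (v : X ⟶ Z) (w : Z ⟶ Y), _root_.IsFinitelyPresentable Z ∧ v ≫ w = u

/-- A strictly locally finitely presentable category: every object has, for each
finitely generated subobject, a finitary endomorphism fixing that subobject. -/
def StrictlyLFP (C : Type u) [Category.{v} C] : Prop :=
  IsLFP C ∧
  ∀ (A M : C) (m : M ⟶ A), Mono m → IsFinitelyGenerated M →
    ∃ u : A ⟶ A, FinitaryMorphism u ∧ m ≫ u = m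

/-- A pure subobject: a monomorphism `b : B ⟶ A` which is a filtered colimit, in the
slice category over `A`, of split subobjects of `A`. -/
def PureSubobject {C : Type u} [Category.{v} C] {A B : C} (b : B ⟶ A) : Prop :=
  ∃ (J : Type v) (_ : SmallCategory J) (_ : IsFiltered J) (Dg : J ⥤ Over A)
    (cc : Cocone Dg), Nonempty (IsColimit cc) ∧ (∀ j : J, IsSplitMono ((Dg.obj j).hom)) ∧
      Nonempty (cc.pt ≅ Over.mk b)

/-- If all subobjects in an lfp category are pure and every finitely generated object is
finitely presentable, then the category is strictly lfp. -/
theorem stmt_14 {C : Type u} [Category.{v} C] (hC : IsLFP C)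
    (hpure : ∀ (A B : C) (b : B ⟶ A), Mono b → PureSubobject b)
    (hfgfp : ∀ X : C, IsFinitelyGenerated X → _root_.IsFinitelyPresentable X) :
    StrictlyLFP C := by
  refine ⟨hC, fun A M m hm hfg => ?_⟩
  obtain ⟨J, _, _, Dg, cc, ⟨hcolim⟩, hsplit, ⟨e⟩⟩ := hpure A M m hm
  -- forget the colimit to C
  haveI : HasColimits C := hC.1
  have hcolim' : IsColimit ((Over.forget A).mapCocone cc) :=
    isColimitOfPreserves (Over.forget A) hcolim
  -- M is finitely presentable
  have hfp : _root_.IsFinitelyPresentable M := hfgfp M hfg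
  obtain ⟨hy⟩ := hfp J ((Dg ⋙ Over.forget A)) ((Over.forget A).mapCocone cc) ⟨hcolim'⟩
  obtain ⟨j, (h : M ⟶ (Dg.obj j).left), hh⟩ := Types.jointly_surjective _ hy (e.inv.left : M ⟶ cc.pt.left)
  -- unpack
  have hh' : h ≫ (cc.ι.app j).left = e.inv.left := hh
  let s : (Dg.obj j).left ⟶ A := (Dg.obj j).hom
  haveI := hsplit j
  let r : A ⟶ (Dg.obj j).left := retraction s
  let i : (Dg.obj j).left ⟶ M := (cc.ι.app j).left ≫ e.hom.left
  have him : i ≫ m = s := by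
    have h1 : e.hom.left ≫ m = cc.pt.hom := Over.w e.hom
    have h2 : (cc.ι.app j).left ≫ cc.pt.hom = s := Over.w (cc.ι.app j)
    simp only [i, Category.assoc, h1, h2]
  have hhi : h ≫ i = 𝟙 M := by
    have : (e.inv ≫ e.hom).left = 𝟙 M := by rw [e.inv_hom_id]; rfl
    simp only [i, ← Category.assoc, hh']
    exact this
  refine ⟨r ≫ i ≫ m, ⟨M, r ≫ i, m, hfp, by simp⟩, ?_⟩
  have hms : m = h ≫ s := by rw [← him, ← Category.assoc, hhi, Category.id_comp]
  calc m ≫ r ≫ i ≫ m = h ≫ (s ≫ r) ≫ i ≫ m := by rw [hms]; simp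
    _ = h ≫ i ≫ m := by rw [IsSplitMono.id s]; simp
    _ = m := by rw [← Category.assoc, hhi, Category.id_comp]
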